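/- arXiv:2405.12912 — 4 statements merged into one kernel-verified Lean document; each statement's English description precedes it below -/
import Mathlib

section
/- If a row-stochastic matrix P on ordered state space {0,1,...,J} has the decreasing failure rate (DFR) property (i.e., for every n, the partial sum of the first n+1 entries of row i is nonincreasing in i), then for any valid (order-preserving, consecutive-block) aggregation of states into superstates {0,...,K} with positive weights β, the aggregated matrix Q defined by q_{kk'} = (Σ_{h∈L_k} Σ_{h'∈L_{k'}} β_h p_{hh'}) / (Σ_{h∈L_k} β_h) also has the DFR property. -/
/-- DFR is preserved under valid state aggregation. -/
theorem dfr_preserved_under_aggregation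
    (J K : ℕ) (P : ℕ → ℕ → ℝ) (β : ℕ → ℝ) (s : ℕ → ℕ)
    (hPnn : ∀ i j, 0 ≤ P i j)
    (hProw : ∀ i, i ≤ J → ∑ j ∈ Finset.range (J+1), P i j = 1)
    (hDFR : ∀ n, n ≤ J → ∀ i i', i ≤ i' → i' ≤ J →
      ∑ j ∈ Finset.range (n+1), P i' j ≤ ∑ j ∈ Finset.range (n+1), P i j)
    (hβ : ∀ h, 0 < β h)
    (hmono : ∀ i i', i ≤ i' → i' ≤ J → s i ≤ s i')
    (hstep : ∀ i, i < J → s (i+1) = s i ∨ s (i+1) = s i + 1)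
    (hs0 : s 0 = 0) (hsJ : s J = K)
    (Q : ℕ → ℕ → ℝ)
    (hQ : ∀ k k', Q k k' =
      (∑ h ∈ (Finset.range (J+1)).filter (fun h => s h = k),
        ∑ h' ∈ (Finset.range (J+1)).filter (fun h' => s h' = k'), β h * P h h') /
      (∑ h ∈ (Finset.range (J+1)).filter (fun h => s h = k), β h)) :
    ∀ n, n ≤ K → ∀ k k', k ≤ k' → k' ≤ K →
      ∑ l ∈ Finset.range (n+1), Q k' l ≤ ∑ l ∈ Finset.range (n+1), Q k l := by
  intro n hn k k' hkk' hk'K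
  have hkK : k ≤ K := le_trans hkk' hk'K
  rcases eq_or_lt_of_le hkk' with rfl | hlt
  · exact le_refl _
  classical
  -- for each t ≤ K there is a maximal m ≤ J with s m = t, and {h ≤ J : s h ≤ t} = {h : h ≤ m}
  have hmax : ∀ t, t ≤ K → ∃ m, m ≤ J ∧ s m = t ∧ ∀ h, h ≤ J → (s h ≤ t ↔ h ≤ m) := by
    intro t ht
    set S := (Finset.range (J+1)).filter (fun i => s i ≤ t) with hS
    have h0 : 0 ∈ S := by
      simp only [hS, Finset.mem_filter, Finset.mem_range, hs0]
      omega
    have hne : S.Nonempty := ⟨0, h0⟩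
    set m := S.max' hne with hm
    have hmS : m ∈ S := S.max'_mem hne
    have hmJ : m ≤ J := by
      have := (Finset.mem_filter.mp hmS).1
      rw [Finset.mem_range] at this; omega
    have hsm : s m ≤ t := (Finset.mem_filter.mp hmS).2
    have hmaxle : ∀ h, h ≤ J → s h ≤ t → h ≤ m := fun h hJ hst =>
      S.le_max' h (Finset.mem_filter.mpr ⟨Finset.mem_range.mpr (by omega), hst⟩)
    have hsmt : s m = t := by
      by_contra hne'
      have hlt' : s m < t := lt_of_le_of_ne hsm hne'
      rcases lt_or_eq_of_le hmJ with hmJ' | heq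
      · have hnext := hstep m hmJ'
        have : m + 1 ≤ m := hmaxle (m+1) (by omega) (by omega)
        omega
      · rw [heq, hsJ] at hlt'
        omega
    refine ⟨m, hmJ, hsmt, fun h hJ => ⟨hmaxle h hJ, fun hhm => ?_⟩⟩
    calc s h ≤ s m := hmono h m hhm hmJ
    _ = t := hsmt
  -- nonemptiness of the blocks
  have hLne : ∀ t, t ≤ K →
      ((Finset.range (J+1)).filter (fun h => s h = t)).Nonempty := by
    intro t ht
    obtain ⟨m, hmJ, hsm, -⟩ := hmax t ht
    exact ⟨m, Finset.mem_filter.mpr ⟨Finset.mem_range.mpr (by omega), hsm⟩⟩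
  obtain ⟨m, hmJ, hsm, hiff⟩ := hmax n hn
  -- collapse the sum of aggregated entries
  have key : ∀ kk, kk ≤ K → ∑ l ∈ Finset.range (n+1), Q kk l
      = (∑ h ∈ (Finset.range (J+1)).filter (fun h => s h = kk),
          β h * ∑ j ∈ Finset.range (m+1), P h j)
        / (∑ h ∈ (Finset.range (J+1)).filter (fun h => s h = kk), β h) := by
    intro kk hkk
    simp only [hQ]
    rw [← Finset.sum_div]
    congr 1
    rw [Finset.sum_comm]
    refine Finset.sum_congr rfl (fun h hh => ?_)
    rw [Finset.sum_fiberwise_eq_sum_filter (Finset.range (J+1)) (Finset.range (n+1))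
      s (fun h' => β h * P h h')]
    have hset : (Finset.range (J+1)).filter (fun h' => s h' ∈ Finset.range (n+1))
        = Finset.range (m+1) := by
      ext x
      simp only [Finset.mem_filter, Finset.mem_range]
      constructor
      · rintro ⟨hx, hsx⟩
        have := (hiff x (by omega)).mp (by omega)
        omega
      · intro hx
        have hxJ : x ≤ J := by omega
        have := (hiff x hxJ).mpr (by omega)
        exact ⟨by omega, by omega⟩
    rw [hset, Finset.mul_sum]
  rw [key k hkK, key k' hk'K]
  set Lk := (Finset.range (J+1)).filter (fun h => s h = k) with hLk
  set Lk' := (Finset.range (J+1)).filter (fun h => s h = k') with hLk'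
  have hBk : 0 < ∑ h ∈ Lk, β h := Finset.sum_pos (fun h _ => hβ h) (hLne k hkK)
  have hBk' : 0 < ∑ h ∈ Lk', β h := Finset.sum_pos (fun h _ => hβ h) (hLne k' hk'K)
  rw [div_le_div_iff₀ hBk' hBk]
  rw [Finset.sum_mul_sum, Finset.sum_mul_sum]
  rw [Finset.sum_comm (s := Lk) (t := Lk')]
  refine Finset.sum_le_sum (fun a ha => Finset.sum_le_sum (fun b hb => ?_))
  -- a ∈ Lk', b ∈ Lk, k < k' ⇒ b ≤ a
  have haJ : a ≤ J ∧ s a = k' := by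
    have := Finset.mem_filter.mp ha
    rw [Finset.mem_range] at this
    exact ⟨by omega, this.2⟩
  have hbJ : b ≤ J ∧ s b = k := by
    have := Finset.mem_filter.mp hb
    rw [Finset.mem_range] at this
    exact ⟨by omega, this.2⟩
  have hba : b ≤ a := by
    by_contra hcon
    have : s a ≤ s b := hmono a b (by omega) hbJ.1
    omega
  have hF : ∑ j ∈ Finset.range (m+1), P a j ≤ ∑ j ∈ Finset.range (m+1), P b j :=
    hDFR m hmJ b a hba haJ.1
  calc (β a * ∑ j ∈ Finset.range (m+1), P a j) * β b
      = (β a * β b) * ∑ j ∈ Finset.range (m+1), P a j := by ring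
    _ ≤ (β a * β b) * ∑ j ∈ Finset.range (m+1), P b j := by
        exact mul_le_mul_of_nonneg_left hF (mul_nonneg (hβ a).le (hβ b).le)
    _ = (β b * ∑ j ∈ Finset.range (m+1), P b j) * β a := by ring
end

section
/- The geometric-tail transition matrix design of Regnier and Shechter is DFR: let 0 < μ < 1, 0 < γ < 1, and λ = (1−μ−γ)/(1−γ−μγ) with 0 < λ < 1. Define P on states {0,1,...,J} by p_{00} = 1, p_{0j} = 0 for j ≥ 1, and for 1 ≤ i ≤ J: p_{i,0} = Σ_{n=i}^∞ μγ^n, p_{ij} = μγ^{i−j} for 1 ≤ j < i, p_{ii} = μ, p_{ij} = μλ^{j−i} for i < j < J, and p_{iJ} = Σ_{n=J−i}^∞ μλ^n. Then for every n ∈ {0,...,J}, the partial sum Σ_{j=0}^n p_{ij} is nonincreasing in i. -/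
/-- the geometric-tail transition matrix design is DFR. -/
theorem geometric_tail_tpm_is_dfr
    (J : ℕ) (hJ : 1 ≤ J) (μ γ lam : ℝ)
    (hμ : 0 < μ ∧ μ < 1) (hγ : 0 < γ ∧ γ < 1) (hlam : 0 < lam ∧ lam < 1)
    (hrel : lam = (1 - μ - γ) / (1 - γ - μ * γ))
    (P : ℕ → ℕ → ℝ)
    (hP00 : P 0 0 = 1) (hP0 : ∀ j, 1 ≤ j → P 0 j = 0)
    (hPi0 : ∀ i, 1 ≤ i → i ≤ J → P i 0 = ∑' n : ℕ, μ * γ ^ (i + n))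
    (hPlow : ∀ i j, 1 ≤ j → j < i → i ≤ J → P i j = μ * γ ^ (i - j))
    (hPdiag : ∀ i, 1 ≤ i → i < J → P i i = μ)
    (hPhigh : ∀ i j, 1 ≤ i → i < j → j < J → P i j = μ * lam ^ (j - i))
    (hPiJ : ∀ i, 1 ≤ i → i ≤ J → P i J = ∑' n : ℕ, μ * lam ^ ((J - i) + n)) :
    ∀ n, n ≤ J → ∀ i i', i ≤ i' → i' ≤ J →
      ∑ j ∈ Finset.range (n+1), P i' j ≤ ∑ j ∈ Finset.range (n+1), P i j := by
  obtain ⟨hμ0, hμ1⟩ := hμ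
  obtain ⟨hγ0, hγ1⟩ := hγ
  obtain ⟨hl0, hl1⟩ := hlam
  have hγ1' : (0:ℝ) < 1 - γ := by linarith
  have hl1' : (0:ℝ) < 1 - lam := by linarith
  -- closed form for geometric tails
  have htsum : ∀ (r : ℝ), 0 ≤ r → r < 1 → ∀ k : ℕ,
      (∑' m : ℕ, μ * r ^ (k + m)) = μ * r ^ k / (1 - r) := by
    intro r hr0 hr1 k
    have h1 : ∀ m : ℕ, μ * r ^ (k + m) = (μ * r ^ k) * r ^ m := by
      intro m; rw [pow_add]; ring
    rw [tsum_congr h1, tsum_mul_left, tsum_geometric_of_lt_one hr0 hr1]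
    rw [div_eq_mul_inv]
  -- key identity from hrel
  have hkey : μ * γ / (1 - γ) + μ / (1 - lam) = 1 := by
    have hD : 1 - γ - μ * γ ≠ 0 := by
      intro h
      rw [hrel, h, div_zero] at hl0
      exact lt_irrefl 0 hl0
    have hDpos : 0 < 1 - γ - μ * γ := by
      rcases lt_trichotomy (1 - γ - μ * γ) 0 with h | h | h
      · exfalso
        have h1 : 1 - lam = μ * (1 - γ) / (1 - γ - μ * γ) := by
          rw [hrel]; field_simp; ring
        have h2 : μ * (1 - γ) / (1 - γ - μ * γ) < 0 := by
          apply div_neg_of_pos_of_neg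
          · positivity
          · exact h
        linarith [h1 ▸ hl1']
      · exact absurd h hD
      · exact h
    have h1 : 1 - lam = μ * (1 - γ) / (1 - γ - μ * γ) := by
      rw [hrel]; field_simp; ring
    rw [h1]
    field_simp
    ring
  -- S i n for n < i
  have hSlow : ∀ i, 1 ≤ i → i ≤ J → ∀ n, n < i →
      ∑ j ∈ Finset.range (n+1), P i j = μ * γ ^ (i - n) / (1 - γ) := by
    intro i hi hiJ n
    induction n with
    | zero =>
      intro _
      have h0 : ∑ j ∈ Finset.range (0+1), P i j = P i 0 := by simp
      rw [h0, hPi0 i hi hiJ, htsum γ hγ0.le hγ1 i]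
      norm_num
    | succ n ih =>
      intro h
      rw [Finset.sum_range_succ, ih (by omega),
        hPlow i (n+1) (by omega) (by omega) hiJ]
      have e : i - n = (i - (n+1)) + 1 := by omega
      rw [e, pow_succ]
      field_simp
      ring
  -- S i i for i < J
  have hSdiag : ∀ i, 1 ≤ i → i < J →
      ∑ j ∈ Finset.range (i+1), P i j = μ * γ / (1 - γ) + μ := by
    intro i hi hiJ
    rw [Finset.sum_range_succ, hPdiag i hi hiJ]
    have e : i = (i - 1) + 1 := by omega
    rw [e]
    rw [hSlow ((i-1)+1) (by omega) (by omega) (i-1) (by omega)]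
    have e2 : (i - 1) + 1 - (i - 1) = 1 := by omega
    rw [e2, pow_one]
  -- S i n for i ≤ n < J
  have hSmid : ∀ i, 1 ≤ i → ∀ n, i ≤ n → n < J →
      ∑ j ∈ Finset.range (n+1), P i j
        = μ * γ / (1 - γ) + μ * (1 - lam ^ (n - i + 1)) / (1 - lam) := by
    intro i hi n hin
    induction n, hin using Nat.le_induction with
    | base =>
      intro hiJ
      rw [hSdiag i hi hiJ]
      have e : i - i + 1 = 1 := by omega
      rw [e, pow_one]
      field_simp
    | succ n hn ih =>
      intro hnJ
      rw [Finset.sum_range_succ, ih (by omega),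
        hPhigh i (n+1) hi (by omega) hnJ]
      have e1 : n + 1 - i = (n - i) + 1 := by omega
      rw [e1]
      have e4 : lam ^ (n - i + 1 + 1) = lam ^ (n - i + 1) * lam := pow_succ _ _
      rw [e4]
      field_simp
      ring
  -- S i J
  have hSJ : ∀ i, 1 ≤ i → i ≤ J →
      ∑ j ∈ Finset.range (J+1), P i j = μ * γ / (1 - γ) + μ / (1 - lam) := by
    intro i hi hiJ
    rw [Finset.sum_range_succ, hPiJ i hi hiJ, htsum lam hl0.le hl1 (J - i)]
    rcases eq_or_lt_of_le hiJ with h | h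
    · -- i = J
      subst h
      have e : i = (i - 1) + 1 := by omega
      rw [e, hSlow ((i-1)+1) (by omega) (by omega) (i-1) (by omega)]
      have e2 : (i - 1) + 1 - (i - 1) = 1 := by omega
      have e3 : (i - 1) + 1 - ((i-1)+1) = 0 := by omega
      rw [e2, e3, pow_one, pow_zero]
      ring
    · -- i < J
      have e : J = (J - 1) + 1 := by omega
      rw [e, hSmid i hi (J-1) (by omega) (by omega)]
      have e2 : J - 1 - i + 1 = J - i := by omega
      rw [e2]
      rw [show J - 1 + 1 - i = J - i by omega]
      field_simp
      ring
  -- S 0 n = 1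
  have hS0 : ∀ n, ∑ j ∈ Finset.range (n+1), P 0 j = 1 := by
    intro n
    induction n with
    | zero => simpa using hP00
    | succ n ih =>
      rw [Finset.sum_range_succ, hP0 (n+1) (by omega), ih, add_zero]
  -- single step: row m+1 vs row m
  have hstep : ∀ m n, m + 1 ≤ J → n ≤ J →
      ∑ j ∈ Finset.range (n+1), P (m+1) j ≤ ∑ j ∈ Finset.range (n+1), P m j := by
    intro m n hm hn
    rcases Nat.eq_zero_or_pos m with hm0 | hm1
    · -- m = 0 : show S 1 n ≤ 1
      subst hm0
      rw [hS0 n]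
      rcases eq_or_lt_of_le hn with hnJ | hnJ
      · subst hnJ
        rw [hSJ 1 le_rfl hJ, hkey]
      · rcases Nat.eq_zero_or_pos n with hn0 | hn1
        · subst hn0
          rw [hSlow 1 le_rfl hJ 0 (by omega)]
          have e : μ * γ ^ (1 - 0) / (1 - γ) = μ * γ / (1 - γ) := by norm_num
          rw [e]
          have hpos : 0 < μ / (1 - lam) := by positivity
          linarith [hkey]
        · rw [hSmid 1 le_rfl n hn1 hnJ]
          have h1 : μ * (1 - lam ^ (n - 1 + 1)) / (1 - lam) ≤ μ / (1 - lam) := by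
            gcongr
            have : 0 ≤ lam ^ (n - 1 + 1) := by positivity
            nlinarith
          linarith [hkey]
    · -- m ≥ 1
      rcases lt_trichotomy n m with hc | hc | hc
      · -- n < m : both low
        rw [hSlow m hm1 (by omega) n hc, hSlow (m+1) (by omega) hm n (by omega)]
        have hp : γ ^ (m + 1 - n) ≤ γ ^ (m - n) :=
          pow_le_pow_of_le_one hγ0.le hγ1.le (by omega)
        exact div_le_div_of_nonneg_right
          (mul_le_mul_of_nonneg_left hp hμ0.le) hγ1'.le
      · -- n = m
        subst hc
        rw [hSdiag n hm1 (by omega), hSlow (n+1) (by omega) hm n (by omega)]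
        have e : n + 1 - n = 1 := by omega
        rw [e, pow_one]
        linarith
      · -- m < n
        rcases eq_or_lt_of_le hn with hnJ | hnJ
        · subst hnJ
          rw [hSJ (m+1) (by omega) hm, hSJ m hm1 (by omega)]
        · rw [hSmid m hm1 n (by omega) hnJ, hSmid (m+1) (by omega) n (by omega) hnJ]
          have e1 : n - (m+1) + 1 = n - m := by omega
          rw [e1]
          have hle : lam ^ (n - m + 1) ≤ lam ^ (n - m) :=
            pow_le_pow_of_le_one hl0.le hl1.le (by omega)
          have h2 : μ * (1 - lam ^ (n - m)) / (1 - lam)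
              ≤ μ * (1 - lam ^ (n - m + 1)) / (1 - lam) := by
            gcongr
          linarith
  -- conclude by induction
  intro n hn i i' hii'
  induction i', hii' using Nat.le_induction with
  | base => intro _; exact le_rfl
  | succ i' hii' ih =>
    intro h
    exact le_trans (hstep i' n h hn) (ih (by omega))
end

section
/- If condition (c) (r(m,1) − r(n,1))/r(m,1) ≤ α(p_{n,0} − p_{m,0}) holds for the boundary states m = min(L_k), n = max(L_{k−1}) of an aggregation, and the aggregated rewards satisfy (r_Q(k,1) − r_Q(k−1,1))/r_Q(k,1) ≤ (r(m,1) − r(n,1))/r(m,1), and P is DFR with β-weighted aggregation Q, then (r_Q(k,1) − r_Q(k−1,1))/r_Q(k,1) ≤ α(q_{k−1,0} − q_{k,0}). -/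
/-- propagation of the reward-slope condition (c) to the aggregated model. -/
theorem reward_slope_condition_propagates
    (J K : ℕ) (P : ℕ → ℕ → ℝ) (β : ℕ → ℝ) (s : ℕ → ℕ) (α : ℝ)
    (r1 : ℕ → ℝ) (rQ : ℕ → ℝ)
    (hα : 0 < α)
    (hPnn : ∀ i j, 0 ≤ P i j)
    (hProw : ∀ i, i ≤ J → ∑ j ∈ Finset.range (J+1), P i j = 1)
    (hDFR : ∀ n, n ≤ J → ∀ i i', i ≤ i' → i' ≤ J →
      ∑ j ∈ Finset.range (n+1), P i' j ≤ ∑ j ∈ Finset.range (n+1), P i j)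
    (hβ : ∀ h, 0 < β h)
    (hmono : ∀ i i', i ≤ i' → i' ≤ J → s i ≤ s i')
    (hstep : ∀ i, i < J → s (i+1) = s i ∨ s (i+1) = s i + 1)
    (hs0 : s 0 = 0) (hsJ : s J = K)
    (hne : ∀ k (_ : k ≤ K), ((Finset.range (J+1)).filter (fun h => s h = k)).Nonempty)
    (hr1pos : ∀ h, 1 ≤ h → h ≤ J → 0 < r1 h)
    (hrQpos : ∀ k, 1 ≤ k → k ≤ K → 0 < rQ k)
    (q0 : ℕ → ℝ)
    (hq0 : ∀ k, q0 k =
      (∑ h ∈ (Finset.range (J+1)).filter (fun h => s h = k), β h * P h 0) /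
      (∑ h ∈ (Finset.range (J+1)).filter (fun h => s h = k), β h)) :
    ∀ k (h2 : 2 ≤ k) (hk : k ≤ K),
      -- m = min L_k, n = max L_{k-1}
      (let m := ((Finset.range (J+1)).filter (fun h => s h = k)).min' (hne k hk)
       let n := ((Finset.range (J+1)).filter (fun h => s h = k - 1)).max' (hne (k-1) (by omega))
       (r1 m - r1 n) / r1 m ≤ α * (P n 0 - P m 0) →
       (rQ k - rQ (k-1)) / rQ k ≤ (r1 m - r1 n) / r1 m →
       (rQ k - rQ (k-1)) / rQ k ≤ α * (q0 (k-1) - q0 k)) := by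
  intro k h2 hk m n hc1 hc2
  have hPmono : ∀ i i', i ≤ i' → i' ≤ J → P i' 0 ≤ P i 0 := by
    intro i i' hii hi'
    simpa using hDFR 0 (Nat.zero_le J) i i' hii hi'
  set S2 := (Finset.range (J+1)).filter (fun h => s h = k) with hS2
  set S1 := (Finset.range (J+1)).filter (fun h => s h = k - 1) with hS1
  have hmS2 : m ∈ S2 := Finset.min'_mem _ _
  have hnS1 : n ∈ S1 := Finset.max'_mem _ _
  have hβ1pos : 0 < ∑ h ∈ S1, β h :=
    Finset.sum_pos (fun h _ => hβ h) ⟨n, hnS1⟩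
  have hβ2pos : 0 < ∑ h ∈ S2, β h :=
    Finset.sum_pos (fun h _ => hβ h) ⟨m, hmS2⟩
  -- q0 (k-1) ≥ P n 0
  have h1 : P n 0 ≤ q0 (k-1) := by
    rw [hq0, ← hS1, le_div_iff₀ hβ1pos]
    rw [Finset.mul_sum]
    apply Finset.sum_le_sum
    intro h hh
    have hhJ : h ≤ J := by
      have := (Finset.mem_filter.mp hh).1; simp at this; omega
    have hhn : h ≤ n := Finset.le_max' _ _ hh
    have := hPmono h n hhn (by
      have := (Finset.mem_filter.mp hnS1).1; simp at this; omega)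
    nlinarith [hβ h, hPnn n 0]
  -- q0 k ≤ P m 0
  have h2' : q0 k ≤ P m 0 := by
    rw [hq0, ← hS2, div_le_iff₀ hβ2pos]
    rw [Finset.mul_sum]
    apply Finset.sum_le_sum
    intro h hh
    have hhJ : h ≤ J := by
      have := (Finset.mem_filter.mp hh).1; simp at this; omega
    have hhm : m ≤ h := Finset.min'_le _ _ hh
    have := hPmono m h hhm hhJ
    nlinarith [hβ h]
  calc (rQ k - rQ (k-1)) / rQ k ≤ (r1 m - r1 n) / r1 m := hc2
    _ ≤ α * (P n 0 - P m 0) := hc1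
    _ ≤ α * (q0 (k-1) - q0 k) := by nlinarith
end

section
/- In a two-action stopping MDP with actions {continue, stop}, discount α ∈ (0,1), stopping reward r(h,1) nondecreasing in h with the system then absorbed with no further reward, continuation reward r(h,0) = c constant, and continuation matrix P^0 that is DFR (hence stochastically monotone decreasing in the ordering worst-to-best), the optimal value function v* satisfying v*(h) = max{ r(h,1), c + α Σ_{h'} p^0_{hh'} v*(h') } is nondecreasing in h. -/
open Finset

lemma sum_mul_mono_of_partial (J : ℕ) (p q w : ℕ → ℝ)
    (hps : ∑ j ∈ range (J+1), p j = 1) (hqs : ∑ j ∈ range (J+1), q j = 1)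
    (hpq : ∀ n, n ≤ J → ∑ j ∈ range (n+1), q j ≤ ∑ j ∈ range (n+1), p j)
    (hw : ∀ i i', i ≤ i' → i' ≤ J → w i ≤ w i') :
    ∑ j ∈ range (J+1), p j * w j ≤ ∑ j ∈ range (J+1), q j * w j := by
  have h1 : ∀ (g : ℕ → ℝ), ∑ j ∈ range (J+1), g j * w j
      = ∑ j ∈ range (J+1), w j * g j := by
    intro g; exact Finset.sum_congr rfl (fun j _ => mul_comm _ _)
  have habel : ∀ (g : ℕ → ℝ), ∑ j ∈ range (J+1), w j * g j
      = w J * ∑ j ∈ range (J+1), g j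
        - ∑ i ∈ range J, (w (i+1) - w i) * ∑ j ∈ range (i+1), g j := by
    intro g
    have := Finset.sum_range_by_parts w g (J+1)
    simpa [smul_eq_mul] using this
  rw [h1, h1, habel, habel, hps, hqs]
  have hle : ∑ i ∈ range J, (w (i+1) - w i) * ∑ j ∈ range (i+1), q j
      ≤ ∑ i ∈ range J, (w (i+1) - w i) * ∑ j ∈ range (i+1), p j := by
    apply Finset.sum_le_sum
    intro i hi
    rw [mem_range] at hi
    have hwd : 0 ≤ w (i+1) - w i := sub_nonneg.2 (hw i (i+1) (by omega) (by omega))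
    exact mul_le_mul_of_nonneg_left (hpq i (by omega)) hwd
  linarith

/-- in a two-action stopping MDP with nondecreasing stopping reward,
constant continuation reward, and DFR continuation matrix, the optimal value
function is nondecreasing. -/
theorem stopping_mdp_value_monotone
    (J : ℕ) (α c : ℝ) (P : ℕ → ℕ → ℝ) (r1 v : ℕ → ℝ)
    (hα : 0 < α ∧ α < 1)
    (hPnn : ∀ i j, 0 ≤ P i j)
    (hProw : ∀ i, i ≤ J → ∑ j ∈ Finset.range (J+1), P i j = 1)
    (hDFR : ∀ n, n ≤ J → ∀ i i', i ≤ i' → i' ≤ J →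
      ∑ j ∈ Finset.range (n+1), P i' j ≤ ∑ j ∈ Finset.range (n+1), P i j)
    (hr1mono : ∀ h h', h ≤ h' → h' ≤ J → r1 h ≤ r1 h')
    (hv : ∀ h, h ≤ J →
      v h = max (r1 h) (c + α * ∑ j ∈ Finset.range (J+1), P h j * v j)) :
    ∀ h h', h ≤ h' → h' ≤ J → v h ≤ v h' := by
  obtain ⟨hα0, hα1⟩ := hα
  -- Bellman operator
  set T : (ℕ → ℝ) → (ℕ → ℝ) :=
    fun u h => max (r1 h) (c + α * ∑ j ∈ range (J+1), P h j * u j) with hT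
  -- T preserves monotone functions
  have hTmono : ∀ u, (∀ i i', i ≤ i' → i' ≤ J → u i ≤ u i') →
      ∀ i i', i ≤ i' → i' ≤ J → T u i ≤ T u i' := by
    intro u hu i i' hii hi'
    apply max_le_max (hr1mono i i' hii hi')
    have hsum := sum_mul_mono_of_partial J (P i) (P i') u
      (hProw i (le_trans hii hi')) (hProw i' hi')
      (fun n hn => hDFR n hn i i' hii hi') hu
    have := mul_le_mul_of_nonneg_left hsum hα0.le
    linarith
  -- iterates from 0
  set W : ℕ → ℕ → ℝ := fun n => T^[n] (fun _ => 0) with hW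
  have hWsucc : ∀ n, W (n+1) = T (W n) := by
    intro n; simp [hW, Function.iterate_succ_apply']
  have hWmono : ∀ n, ∀ i i', i ≤ i' → i' ≤ J → W n i ≤ W n i' := by
    intro n
    induction n with
    | zero => intro i i' _ _; simp [hW]
    | succ m ih => rw [hWsucc]; exact hTmono (W m) ih
  -- sup distance
  have hne : (range (J+1)).Nonempty := ⟨0, mem_range.2 (Nat.succ_pos J)⟩
  set D : ℕ → ℝ := fun n => (range (J+1)).sup' hne (fun j => |v j - W n j|) with hD
  have hDnn : ∀ n, 0 ≤ D n := by
    intro n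
    exact le_trans (abs_nonneg (v 0 - W n 0))
      (Finset.le_sup' (fun j => |v j - W n j|) (mem_range.2 (Nat.succ_pos J)))
  have hDle : ∀ n j, j ∈ range (J+1) → |v j - W n j| ≤ D n := by
    intro n j hj; exact Finset.le_sup' (fun j => |v j - W n j|) hj
  -- contraction step
  have hcontr : ∀ n, D (n+1) ≤ α * D n := by
    intro n
    apply Finset.sup'_le
    intro h hh
    rw [mem_range] at hh
    have hhJ : h ≤ J := by omega
    have hvh := hv h hhJ
    rw [hWsucc]
    have hTv : v h = T v h := hvh
    calc |v h - T (W n) h| = |T v h - T (W n) h| := by rw [← hTv]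
      _ ≤ |(c + α * ∑ j ∈ range (J+1), P h j * v j)
            - (c + α * ∑ j ∈ range (J+1), P h j * W n j)| := by
          simp only [hT]
          rw [max_comm (r1 h) (c + α * ∑ j ∈ range (J+1), P h j * v j),
              max_comm (r1 h) (c + α * ∑ j ∈ range (J+1), P h j * W n j)]
          exact abs_max_sub_max_le_abs _ _ _
      _ = α * |∑ j ∈ range (J+1), (P h j * v j - P h j * W n j)| := by
          have heq : c + α * ∑ j ∈ range (J+1), P h j * v j
              - (c + α * ∑ j ∈ range (J+1), P h j * W n j)
              = α * ∑ j ∈ range (J+1), (P h j * v j - P h j * W n j) := by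
            rw [Finset.sum_sub_distrib]; ring
          rw [heq, abs_mul, abs_of_nonneg hα0.le]
      _ ≤ α * ∑ j ∈ range (J+1), P h j * |v j - W n j| := by
          apply mul_le_mul_of_nonneg_left _ hα0.le
          calc |∑ j ∈ range (J+1), (P h j * v j - P h j * W n j)|
              ≤ ∑ j ∈ range (J+1), |P h j * v j - P h j * W n j| :=
                Finset.abs_sum_le_sum_abs _ _
            _ = ∑ j ∈ range (J+1), P h j * |v j - W n j| := by
                apply Finset.sum_congr rfl
                intro j _
                rw [← mul_sub, abs_mul, abs_of_nonneg (hPnn h j)]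
      _ ≤ α * ∑ j ∈ range (J+1), P h j * D n := by
          apply mul_le_mul_of_nonneg_left _ hα0.le
          apply Finset.sum_le_sum
          intro j hj
          exact mul_le_mul_of_nonneg_left (hDle n j hj) (hPnn h j)
      _ = α * D n := by rw [← Finset.sum_mul, hProw h hhJ, one_mul]
  have hDgeom : ∀ n, D n ≤ α ^ n * D 0 := by
    intro n
    induction n with
    | zero => simp
    | succ m ih =>
        calc D (m+1) ≤ α * D m := hcontr m
          _ ≤ α * (α ^ m * D 0) := mul_le_mul_of_nonneg_left ih hα0.le
          _ = α ^ (m+1) * D 0 := by ring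
  -- conclude
  intro h h' hhh' hh'J
  have hhmem : h ∈ range (J+1) := mem_range.2 (by omega)
  have hh'mem : h' ∈ range (J+1) := mem_range.2 (by omega)
  have hbound : ∀ n, v h - v h' ≤ 2 * D 0 * α ^ n := by
    intro n
    have h1 : |v h - W n h| ≤ D n := hDle n h hhmem
    have h2 : |v h' - W n h'| ≤ D n := hDle n h' hh'mem
    have h3 : W n h ≤ W n h' := hWmono n h h' hhh' hh'J
    have h4 := abs_le.1 h1
    have h5 := abs_le.1 h2
    have h6 := hDgeom n
    nlinarith
  have htend : Filter.Tendsto (fun n => 2 * D 0 * α ^ n) Filter.atTop (nhds 0) := by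
    have := tendsto_pow_atTop_nhds_zero_of_lt_one hα0.le hα1
    simpa using this.const_mul (2 * D 0)
  have := ge_of_tendsto htend (Filter.Eventually.of_forall hbound)
  linarith
end
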